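/- Let V be a 4-dimensional real vector space with a Lorentz metric, let W be a subspace of bivectors on V, and let U be the span of the union of the blades of the members of W (taking both blades for non-simple members). If dim U < 4 then every member of W is simple and there exists a nonzero vector k ∈ V with F_{ab}k^b = 0 for all F ∈ W. -/

import Mathlib

open scoped BigOperators
open Matrix

/-- A bivector is *simple* if it is the exterior product of two (co)vectors. -/
def IsSimpleBivector (F : Matrix (Fin 4) (Fin 4) ℝ) : Prop :=
  ∃ r s : Fin 4 → ℝ, ∀ a b, F a b = r a * s b - r b * s a

/-- A metric has Lorentz signature if it is congruent to diag(1,1,1,-1). -/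
def IsLorentzMetric (g : Matrix (Fin 4) (Fin 4) ℝ) : Prop :=
  (∀ a b, g a b = g b a) ∧
  ∃ P : Matrix (Fin 4) (Fin 4) ℝ, IsUnit P.det ∧
    Pᵀ * g * P = Matrix.diagonal ![1, 1, 1, -1]

/-- The span of the union of the blades of the members of a space `W` of bivectors
(for a simple bivector the blade is the range of the associated linear map; for a
non-simple bivector the range is the span of its two blades). -/
def bladeSpan (W : Submodule ℝ (Matrix (Fin 4) (Fin 4) ℝ)) :
    Submodule ℝ (Fin 4 → ℝ) :=
  ⨆ F : W, LinearMap.range (Matrix.mulVecLin (F : Matrix (Fin 4) (Fin 4) ℝ))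

lemma det_skew_aux (a b c d e f : ℝ) :
    (!![0,a,b,c; -a,0,d,e; -b,-d,0,f; -c,-e,-f,0] : Matrix (Fin 4) (Fin 4) ℝ).det
      = (a*f - b*e + c*d)^2 := by
  simp [Matrix.det_succ_row_zero, Fin.sum_univ_succ, Fin.succAbove]
  ring

/-- An antisymmetric matrix whose Pfaffian vanishes is a simple bivector. -/
lemma simple_of_pf_zero (F : Matrix (Fin 4) (Fin 4) ℝ) (hA : ∀ a b, F a b = -F b a)
    (hp : F 0 1 * F 2 3 - F 0 2 * F 1 3 + F 0 3 * F 1 2 = 0) : IsSimpleBivector F := by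
  have e10 := hA 1 0
  have e20 := hA 2 0
  have e30 := hA 3 0
  have e21 := hA 2 1
  have e31 := hA 3 1
  have e32 := hA 3 2
  have e00 : F 0 0 = 0 := by have := hA 0 0; linarith
  have e11 : F 1 1 = 0 := by have := hA 1 1; linarith
  have e22 : F 2 2 = 0 := by have := hA 2 2; linarith
  have e33 : F 3 3 = 0 := by have := hA 3 3; linarith
  by_cases h01 : F 0 1 = 0
  · by_cases h02 : F 0 2 = 0
    · by_cases h03 : F 0 3 = 0
      · by_cases h12 : F 1 2 = 0
        · by_cases h13 : F 1 3 = 0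
          · by_cases h23 : F 2 3 = 0
            · -- F = 0
              refine ⟨0, 0, fun a b => ?_⟩
              fin_cases a <;> fin_cases b <;>
                simp only [show ((⟨0, by omega⟩ : Fin 4)) = 0 from rfl,
                  show ((⟨1, by omega⟩ : Fin 4)) = 1 from rfl,
                  show ((⟨2, by omega⟩ : Fin 4)) = 2 from rfl,
                  show ((⟨3, by omega⟩ : Fin 4)) = 3 from rfl,
                  e10, e20, e30, e21, e31, e32, e00, e11, e22, e33,
                  h01, h02, h03, h12, h13, h23, Pi.zero_apply] <;> ring
            · -- F 2 3 ≠ 0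
              refine ⟨fun a => F a 2, fun b => F b 3 / F 2 3, fun a b => ?_⟩
              field_simp
              fin_cases a <;> fin_cases b
              all_goals simp only [show ((⟨0, by omega⟩ : Fin 4)) = 0 from rfl,
                show ((⟨1, by omega⟩ : Fin 4)) = 1 from rfl,
                show ((⟨2, by omega⟩ : Fin 4)) = 2 from rfl,
                show ((⟨3, by omega⟩ : Fin 4)) = 3 from rfl,
                e10, e20, e30, e21, e31, e32, e00, e11, e22, e33]
              all_goals try ring1
              all_goals try linear_combination hp
              all_goals linear_combination (-hp)
          · -- F 1 3 ≠ 0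
            refine ⟨fun a => F a 1, fun b => F b 3 / F 1 3, fun a b => ?_⟩
            field_simp
            fin_cases a <;> fin_cases b
            all_goals simp only [show ((⟨0, by omega⟩ : Fin 4)) = 0 from rfl,
              show ((⟨1, by omega⟩ : Fin 4)) = 1 from rfl,
              show ((⟨2, by omega⟩ : Fin 4)) = 2 from rfl,
              show ((⟨3, by omega⟩ : Fin 4)) = 3 from rfl,
              e10, e20, e30, e21, e31, e32, e00, e11, e22, e33]
            all_goals try ring1
            all_goals try linear_combination hp
            all_goals linear_combination (-hp)
        · -- F 1 2 ≠ 0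
          refine ⟨fun a => F a 1, fun b => F b 2 / F 1 2, fun a b => ?_⟩
          field_simp
          fin_cases a <;> fin_cases b
          all_goals simp only [show ((⟨0, by omega⟩ : Fin 4)) = 0 from rfl,
            show ((⟨1, by omega⟩ : Fin 4)) = 1 from rfl,
            show ((⟨2, by omega⟩ : Fin 4)) = 2 from rfl,
            show ((⟨3, by omega⟩ : Fin 4)) = 3 from rfl,
            e10, e20, e30, e21, e31, e32, e00, e11, e22, e33]
          all_goals try ring1
          all_goals try linear_combination hp
          all_goals linear_combination (-hp)
      · -- F 0 3 ≠ 0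
        refine ⟨fun a => F a 0, fun b => F b 3 / F 0 3, fun a b => ?_⟩
        field_simp
        fin_cases a <;> fin_cases b
        all_goals simp only [show ((⟨0, by omega⟩ : Fin 4)) = 0 from rfl,
          show ((⟨1, by omega⟩ : Fin 4)) = 1 from rfl,
          show ((⟨2, by omega⟩ : Fin 4)) = 2 from rfl,
          show ((⟨3, by omega⟩ : Fin 4)) = 3 from rfl,
          e10, e20, e30, e21, e31, e32, e00, e11, e22, e33]
        all_goals try ring1
        all_goals try linear_combination hp
        all_goals linear_combination (-hp)
    · -- F 0 2 ≠ 0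
      refine ⟨fun a => F a 0, fun b => F b 2 / F 0 2, fun a b => ?_⟩
      field_simp
      fin_cases a <;> fin_cases b
      all_goals simp only [show ((⟨0, by omega⟩ : Fin 4)) = 0 from rfl,
        show ((⟨1, by omega⟩ : Fin 4)) = 1 from rfl,
        show ((⟨2, by omega⟩ : Fin 4)) = 2 from rfl,
        show ((⟨3, by omega⟩ : Fin 4)) = 3 from rfl,
        e10, e20, e30, e21, e31, e32, e00, e11, e22, e33]
      all_goals try ring1
      all_goals try linear_combination hp
      all_goals linear_combination (-hp)
  · -- F 0 1 ≠ 0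
    refine ⟨fun a => F a 0, fun b => F b 1 / F 0 1, fun a b => ?_⟩
    field_simp
    fin_cases a <;> fin_cases b
    all_goals simp only [show ((⟨0, by omega⟩ : Fin 4)) = 0 from rfl,
      show ((⟨1, by omega⟩ : Fin 4)) = 1 from rfl,
      show ((⟨2, by omega⟩ : Fin 4)) = 2 from rfl,
      show ((⟨3, by omega⟩ : Fin 4)) = 3 from rfl,
      e10, e20, e30, e21, e31, e32, e00, e11, e22, e33]
    all_goals try ring1
    all_goals try linear_combination hp
    all_goals linear_combination (-hp)

/-- The determinant of an antisymmetric `4 × 4` matrix is the square of its Pfaffian. -/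
lemma det_eq_pf_sq (F : Matrix (Fin 4) (Fin 4) ℝ) (hA : ∀ a b, F a b = -F b a) :
    F.det = (F 0 1 * F 2 3 - F 0 2 * F 1 3 + F 0 3 * F 1 2)^2 := by
  have e10 := hA 1 0
  have e20 := hA 2 0
  have e30 := hA 3 0
  have e21 := hA 2 1
  have e31 := hA 3 1
  have e32 := hA 3 2
  have e00 : F 0 0 = 0 := by have := hA 0 0; linarith
  have e11 : F 1 1 = 0 := by have := hA 1 1; linarith
  have e22 : F 2 2 = 0 := by have := hA 2 2; linarith
  have e33 : F 3 3 = 0 := by have := hA 3 3; linarith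
  have hFeq : F = !![0, F 0 1, F 0 2, F 0 3; -(F 0 1), 0, F 1 2, F 1 3;
      -(F 0 2), -(F 1 2), 0, F 2 3; -(F 0 3), -(F 1 3), -(F 2 3), 0] := by
    ext a b
    fin_cases a <;> fin_cases b <;>
      simp only [show ((⟨0, by omega⟩ : Fin 4)) = 0 from rfl,
        show ((⟨1, by omega⟩ : Fin 4)) = 1 from rfl,
        show ((⟨2, by omega⟩ : Fin 4)) = 2 from rfl,
        show ((⟨3, by omega⟩ : Fin 4)) = 3 from rfl,
        e10, e20, e30, e21, e31, e32, e00, e11, e22, e33] <;>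
      simp [Matrix.cons_val_one]
  conv_lhs => rw [hFeq]
  rw [det_skew_aux]

/-- if the span `U` of the union of the blades of the members of a
space `W` of bivectors has dimension less than 4, then every member of `W` is
simple and some nonzero vector is annihilated by every member of `W`. -/
theorem all_simple_of_bladeSpan_small
    (g : Matrix (Fin 4) (Fin 4) ℝ) (hg : IsLorentzMetric g)
    (W : Submodule ℝ (Matrix (Fin 4) (Fin 4) ℝ))
    (hanti : ∀ F ∈ W, ∀ a b, F a b = - F b a)
    (hU : Module.finrank ℝ (bladeSpan W) < 4) :
    (∀ F ∈ W, IsSimpleBivector F) ∧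
      ∃ k : Fin 4 → ℝ, k ≠ 0 ∧ ∀ F ∈ W, Matrix.mulVec F k = 0 := by
  -- `bladeSpan W` is a proper submodule
  have hlt : bladeSpan W < ⊤ := by
    rw [lt_top_iff_ne_top]
    intro h
    rw [h, finrank_top, Module.finrank_fin_fun] at hU
    exact lt_irrefl 4 hU
  -- get a nonzero functional vanishing on `bladeSpan W`
  obtain ⟨f, hf0, hfmap⟩ := Submodule.exists_dual_map_eq_bot_of_lt_top hlt inferInstance
  set k : Fin 4 → ℝ := fun b => f (Pi.single b 1) with hk_def
  have hfx : ∀ x : Fin 4 → ℝ, f x = ∑ b, x b * k b := by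
    intro x
    conv_lhs => rw [← Finset.univ_sum_single x]
    rw [map_sum]
    refine Finset.sum_congr rfl fun b _ => ?_
    have hsingle : Pi.single b (x b) = x b • (Pi.single b 1 : Fin 4 → ℝ) := by
      funext c
      by_cases hc : c = b <;> simp [Pi.single_apply, hc]
    rw [hsingle, f.map_smul, smul_eq_mul]
  have hk0 : k ≠ 0 := by
    intro h
    apply hf0
    apply LinearMap.ext
    intro x
    rw [hfx]
    simp only [LinearMap.zero_apply]
    have : ∀ b, k b = 0 := fun b => congrFun h b
    simp [this]
  -- every member of W annihilates k on the left, hence (by antisymmetry) on the right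
  have hfF : ∀ F ∈ W, ∀ x : Fin 4 → ℝ, f (Matrix.mulVec F x) = 0 := by
    intro F hF x
    have hmem : Matrix.mulVec F x ∈ bladeSpan W := by
      have h1 : Matrix.mulVec F x ∈ LinearMap.range (Matrix.mulVecLin F) := ⟨x, rfl⟩
      exact (le_iSup (fun (G : W) =>
        LinearMap.range (Matrix.mulVecLin (G : Matrix (Fin 4) (Fin 4) ℝ))) ⟨F, hF⟩) h1
    have h2 : f (Matrix.mulVec F x) ∈ (bladeSpan W).map f :=
      Submodule.mem_map_of_mem hmem
    rw [hfmap] at h2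
    exact (Submodule.mem_bot ℝ).mp h2
  have hcol : ∀ F ∈ W, ∀ a : Fin 4, ∑ b, F b a * k b = 0 := by
    intro F hF a
    have := hfF F hF (Pi.single a 1)
    rw [hfx] at this
    simpa [Matrix.mulVec_single] using this
  have hmul : ∀ F ∈ W, Matrix.mulVec F k = 0 := by
    intro F hF
    funext a
    have h1 : Matrix.mulVec F k a = ∑ b, F a b * k b := by
      simp [Matrix.mulVec, dotProduct]
    have h2 : ∑ b, F a b * k b = -∑ b, F b a * k b := by
      rw [← Finset.sum_neg_distrib]
      refine Finset.sum_congr rfl fun b _ => ?_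
      rw [hanti F hF a b]; ring
    rw [Pi.zero_apply, h1, h2, hcol F hF a, neg_zero]
  refine ⟨fun F hF => ?_, k, hk0, hmul⟩
  -- F has nontrivial kernel, so det F = 0, so the Pfaffian vanishes
  have hdet : F.det = 0 :=
    Matrix.exists_mulVec_eq_zero_iff.mp ⟨k, hk0, hmul F hF⟩
  have hpf2 : (F 0 1 * F 2 3 - F 0 2 * F 1 3 + F 0 3 * F 1 2)^2 = 0 := by
    rw [← det_eq_pf_sq F (hanti F hF), hdet]
  have hpf : F 0 1 * F 2 3 - F 0 2 * F 1 3 + F 0 3 * F 1 2 = 0 := by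
    nlinarith [sq_nonneg (F 0 1 * F 2 3 - F 0 2 * F 1 3 + F 0 3 * F 1 2)]
  exact simple_of_pf_zero F (hanti F hF) hpf
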